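/- Let 0 < γ ≤ 1, ρ ∈ (0,1) and γ(1−ρ) < A < γ. Define ρ₀ : ℝ → [0,1] by ρ₀(u) = ρ for u < 0, ρ₀(u) = 1 − A/γ for 0 ≤ u < γ−A, ρ₀(u) = (u − A + γ)/(2γ) for γ−A ≤ u < A−γ+2ργ, and ρ₀(u) = ρ for u ≥ A−γ+2ργ. Then ∫_ℝ h_ρ(ρ₀(u)) du = A·log(A/(γ(1−ρ))) − A + γ(1−ρ). -/

import Mathlib

open MeasureTheory

/-- `h_ρ(z) = z log(z/ρ) + (1-z) log((1-z)/(1-ρ))` (with `0 log 0 = 0`,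
which holds automatically since `Real.log 0 = 0`). -/
noncomputable def hRho (ρ z : ℝ) : ℝ :=
  z * Real.log (z / ρ) + (1 - z) * Real.log ((1 - z) / (1 - ρ))

/-- The initial profile used in the lower bound for `γ(1-ρ) < A < γ`. -/
noncomputable def prof17 (γ ρ A u : ℝ) : ℝ :=
  if u < 0 then ρ
  else if u < γ - A then 1 - A / γ
  else if u < A - γ + 2 * ρ * γ then (u - A + γ) / (2 * γ)
  else ρ

/-- antiderivative of `hRho ρ`. -/
noncomputable def Gaux (ρ z : ℝ) : ℝ :=
  z^2/2 * (Real.log z - Real.log ρ) - z^2/4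
    - (1-z)^2/2 * (Real.log (1-z) - Real.log (1-ρ)) + (1-z)^2/4

lemma Gaux_hasDerivAt (ρ z : ℝ) (hρ0 : 0 < ρ) (hρ1 : ρ < 1)
    (hz0 : 0 < z) (hz1 : z < 1) :
    HasDerivAt (Gaux ρ) (hRho ρ z) z := by
  have h1z : (0:ℝ) < 1 - z := by linarith
  have h1ρ : (0:ℝ) < 1 - ρ := by linarith
  have hw : HasDerivAt (fun z : ℝ => 1 - z) (-1) z := (hasDerivAt_id z).const_sub 1
  have h1 : HasDerivAt (fun z : ℝ => z^2/2 * (Real.log z - Real.log ρ))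
      (z * (Real.log z - Real.log ρ) + z/2) z := by
    have := ((hasDerivAt_pow 2 z).div_const 2).mul
      ((Real.hasDerivAt_log hz0.ne').sub_const (Real.log ρ))
    refine this.congr_deriv ?_
    field_simp
    ring
  have h2 : HasDerivAt (fun z : ℝ => z^2/4) (z/2) z := by
    have := (hasDerivAt_pow 2 z).div_const 4
    refine this.congr_deriv ?_
    ring
  have hlog1z : HasDerivAt (fun z : ℝ => Real.log (1 - z)) ((1-z)⁻¹ * (-1)) z :=
    (Real.hasDerivAt_log h1z.ne').comp z hw
  have h3 : HasDerivAt (fun z : ℝ => (1-z)^2/2 * (Real.log (1-z) - Real.log (1-ρ)))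
      (-(1-z) * (Real.log (1-z) - Real.log (1-ρ)) - (1-z)/2) z := by
    have := ((hw.pow 2).div_const 2).mul (hlog1z.sub_const (Real.log (1-ρ)))
    refine this.congr_deriv ?_
    simp only [Pi.pow_apply]
    field_simp
    ring
  have h4 : HasDerivAt (fun z : ℝ => (1-z)^2/4) (-(1-z)/2) z := by
    have := (hw.pow 2).div_const 4
    refine this.congr_deriv ?_
    ring
  have := ((h1.sub h2).sub h3).add h4
  refine this.congr_deriv ?_
  unfold hRho
  rw [Real.log_div hz0.ne' hρ0.ne', Real.log_div h1z.ne' h1ρ.ne']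
  ring

set_option maxHeartbeats 1000000 in
/-- The relative entropy cost of the profile `prof17` is
`A log(A/(γ(1-ρ))) - A + γ(1-ρ)`. -/
theorem stmt17 (γ ρ A : ℝ) (hγ0 : 0 < γ) (hγ1 : γ ≤ 1)
    (hρ0 : 0 < ρ) (hρ1 : ρ < 1) (hA1 : γ * (1 - ρ) < A) (hA2 : A < γ) :
    ∫ u : ℝ, hRho ρ (prof17 γ ρ A u)
      = A * Real.log (A / (γ * (1 - ρ))) - A + γ * (1 - ρ) := by
  have h1ρ : (0:ℝ) < 1 - ρ := by linarith
  have hA0 : 0 < A := lt_trans (by positivity) hA1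
  have hb0 : 0 < 1 - A / γ := by
    rw [sub_pos, div_lt_one hγ0]; exact hA2
  have hbρ : 1 - A / γ < ρ := by
    have h : (1 - ρ) < A / γ := by rw [lt_div_iff₀ hγ0]; nlinarith
    linarith
  have hgA : 0 < γ - A := sub_pos.mpr hA2
  set M := A - γ + 2 * ρ * γ with hMdef
  have hgAM : γ - A < M := by simp only [hMdef]; nlinarith
  have h0M : (0:ℝ) < M := lt_trans hgA hgAM
  have hRhoρ : hRho ρ ρ = 0 := by
    simp [hRho, div_self hρ0.ne', div_self h1ρ.ne']
  -- support
  have hsupp : ∀ u : ℝ, u ∉ Set.Ico (0:ℝ) M → hRho ρ (prof17 γ ρ A u) = 0 := by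
    intro u hu
    rcases not_and_or.mp hu with h | h
    · push_neg at h
      rw [prof17, if_pos h, hRhoρ]
    · push_neg at h
      rw [prof17, if_neg (by linarith), if_neg (by linarith), if_neg (by linarith), hRhoρ]
  have hind : (fun u => hRho ρ (prof17 γ ρ A u))
      = (Set.Ico (0:ℝ) M).indicator (fun u => hRho ρ (prof17 γ ρ A u)) := by
    funext u
    by_cases h : u ∈ Set.Ico (0:ℝ) M
    · rw [Set.indicator_of_mem h]
    · rw [Set.indicator_of_notMem h, hsupp u h]
  rw [hind, MeasureTheory.integral_indicator measurableSet_Ico,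
    MeasureTheory.setIntegral_congr_set MeasureTheory.Ico_ae_eq_Ioc,
    ← intervalIntegral.integral_of_le h0M.le]
  -- equalities on pieces
  have hc1 : Set.EqOn (fun u => hRho ρ (prof17 γ ρ A u))
      (fun _ => hRho ρ (1 - A / γ)) (Set.uIcc 0 (γ - A)) := by
    intro u hu
    rw [Set.uIcc_of_le hgA.le] at hu
    obtain ⟨hu1, hu2⟩ := hu
    simp only
    rw [prof17, if_neg (by linarith)]
    by_cases h : u < γ - A
    · rw [if_pos h]
    · push_neg at h
      have hu3 : u = γ - A := le_antisymm hu2 h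
      rw [if_neg (by linarith), if_pos (by linarith)]
      congr 1
      rw [hu3]
      field_simp
      ring
  have hc2 : Set.EqOn (fun u => hRho ρ (prof17 γ ρ A u))
      (fun u => hRho ρ ((u - A + γ) / (2 * γ))) (Set.uIcc (γ - A) M) := by
    intro u hu
    rw [Set.uIcc_of_le hgAM.le] at hu
    obtain ⟨hu1, hu2⟩ := hu
    simp only
    rw [prof17, if_neg (by linarith), if_neg (by linarith)]
    by_cases h : u < M
    · rw [if_pos h]
    · push_neg at h
      have hu3 : u = M := le_antisymm hu2 h
      rw [if_neg (by linarith)]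
      congr 1
      rw [hu3]
      simp only [hMdef]
      field_simp
      ring
  -- continuity of hRho on (0,1)
  have hAt : ∀ z : ℝ, 0 < z → z < 1 → ContinuousAt (hRho ρ) z := by
    intro z h0 h1
    have h1z : (0:ℝ) < 1 - z := by linarith
    unfold hRho
    have l1 : ContinuousAt (fun z : ℝ => Real.log (z / ρ)) z :=
      (Real.continuousAt_log (by positivity)).comp (continuousAt_id.div_const ρ)
    have l2 : ContinuousAt (fun z : ℝ => Real.log ((1 - z) / (1 - ρ))) z :=
      (Real.continuousAt_log (by positivity)).comp
        ((continuousAt_const.sub continuousAt_id).div_const (1 - ρ))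
    exact (continuousAt_id.mul l1).add ((continuousAt_const.sub continuousAt_id).mul l2)
  -- z-bounds on the second interval
  have hzb : ∀ u ∈ Set.uIcc (γ - A) M,
      0 < (u - A + γ) / (2 * γ) ∧ (u - A + γ) / (2 * γ) < 1 := by
    intro u hu
    rw [Set.uIcc_of_le hgAM.le] at hu
    obtain ⟨hu1, hu2⟩ := hu
    constructor
    · apply div_pos (by linarith) (by positivity)
    · rw [div_lt_one (by positivity)]
      have : u ≤ A - γ + 2 * ρ * γ := hu2
      nlinarith
  -- integrability
  have hi1 : IntervalIntegrable (fun u => hRho ρ (prof17 γ ρ A u)) volume 0 (γ - A) :=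
    (continuousOn_const.congr hc1).intervalIntegrable
  have hcont2 : ContinuousOn ((hRho ρ) ∘ (fun u => (u - A + γ) / (2 * γ)))
      (Set.uIcc (γ - A) M) := by
    intro u hu
    obtain ⟨hz0, hz1⟩ := hzb u hu
    have hin : ContinuousAt (fun u : ℝ => (u - A + γ) / (2 * γ)) u := by fun_prop
    exact (ContinuousAt.comp (x := u) (hAt _ hz0 hz1) hin).continuousWithinAt
  have hi2 : IntervalIntegrable (fun u => hRho ρ (prof17 γ ρ A u)) volume (γ - A) M :=
    (hcont2.congr hc2).intervalIntegrable
  rw [← intervalIntegral.integral_add_adjacent_intervals hi1 hi2,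
    intervalIntegral.integral_congr hc1, intervalIntegral.integral_congr hc2,
    intervalIntegral.integral_const]
  -- FTC on second piece
  have hftc : ∫ u in (γ - A)..M, hRho ρ ((u - A + γ) / (2 * γ))
      = 2 * γ * Gaux ρ ρ - 2 * γ * Gaux ρ (1 - A / γ) := by
    have hderiv : ∀ u ∈ Set.uIcc (γ - A) M,
        HasDerivAt (fun u => 2 * γ * Gaux ρ ((u - A + γ) / (2 * γ)))
          (hRho ρ ((u - A + γ) / (2 * γ))) u := by
      intro u hu
      obtain ⟨hz0, hz1⟩ := hzb u hu
      have hin : HasDerivAt (fun u : ℝ => (u - A + γ) / (2 * γ)) (1 / (2 * γ)) u :=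
        (((hasDerivAt_id u).sub_const A).add_const γ).div_const (2 * γ)
      have hcomp := ((Gaux_hasDerivAt ρ _ hρ0 hρ1 hz0 hz1).comp u hin).const_mul (2 * γ)
      refine hcomp.congr_deriv ?_
      field_simp
    have := intervalIntegral.integral_eq_sub_of_hasDerivAt hderiv
      (hcont2.intervalIntegrable)
    rw [this]
    have e1 : (M - A + γ) / (2 * γ) = ρ := by
      simp only [hMdef]; field_simp; ring
    have e2 : ((γ - A) - A + γ) / (2 * γ) = 1 - A / γ := by
      field_simp; ring
    rw [e1, e2]
  rw [hftc]
  -- final algebra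
  have e3 : (1:ℝ) - (1 - A / γ) = A / γ := by ring
  have e4 : A / (γ * (1 - ρ)) = (A / γ) / (1 - ρ) := by rw [div_div]
  have hAγ : (0:ℝ) < A / γ := by positivity
  rw [e4, smul_eq_mul]
  unfold hRho Gaux
  rw [e3, Real.log_div hb0.ne' hρ0.ne', Real.log_div hAγ.ne' h1ρ.ne']
  field_simp
  ring
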